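/- Let F be a field, n ≥ 1, and α = (αᵢ)_{i ≤ n−2} a sequence in F. Define A(n,α) = F((x)) ⊕ F[x]/(xⁿ) with componentwise multiplication and linear functional t given by t(x^{n−1}) = 1, t(xⁱ) = αᵢ for i ≤ n−2, t([x]^{n−1}) = −1, t([x]ⁱ) = −αᵢ for 0 ≤ i ≤ n−2, and t(xᵏ) = 0 for k ≥ n. Embed F[[x]] diagonally by f ↦ (f, [f]). Then the bilinear form (f,g) ↦ t(fg) on A(n,α) is non-degenerate, and the orthogonal complement of the image of F[[x]] with respect to this form equals the image of F[[x]] itself (i.e. the diagonal copy of F[[x]] is Lagrangian-like: F[[x]]^{⊥_t} = F[[x]]). -/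

import Mathlib

noncomputable section

variable {F : Type*} [Field F]

/-- The trace functional on the Laurent-series component of `A(n,α)`:
`t₁(f) = Σᵢ αᵢ fᵢ`, where `α : ℤ → F` encodes the sequence `(αᵢ)_{i ≤ n-2}` together with
the normalizations `α_{n-1} = 1` and `α_k = 0` for `k ≥ n`. -/
noncomputable def traceLaurent (α : ℤ → F) (f : LaurentSeries F) : F :=
  ∑ᶠ i : ℤ, α i * f.coeff i

/-- The trace functional on the truncated component `F[x]/(xⁿ)` of `A(n,α)`, computed on a
polynomial representative: `t₂(g) = Σ_{0 ≤ i < n} αᵢ gᵢ` (it only depends on `g mod xⁿ`). -/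
noncomputable def traceTrunc (n : ℕ) (α : ℤ → F) (g : Polynomial F) : F :=
  ∑ i ∈ Finset.range n, α (i : ℤ) * g.coeff i

/-- The trace form `B(a, b) = t(ab)` of `A(n,α) = F((x)) ⊕ F[x]/(xⁿ)`, where
`t(f, [g]) = t₁(f) - t₂(g)`, computed on representatives. -/
noncomputable def traceForm (n : ℕ) (α : ℤ → F)
    (u v : LaurentSeries F × Polynomial F) : F :=
  traceLaurent α (u.1 * v.1) - traceTrunc n α (u.2 * v.2)

/-! ### Auxiliary lemmas -/

lemma coeff_mul_single' (f : LaurentSeries F) (m i : ℤ) :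
    (f * HahnSeries.single m (1:F)).coeff i = f.coeff (i - m) := by
  have h := HahnSeries.coeff_mul_single_add (R := F) (x := f) (r := (1:F)) (b := m) (a := i - m)
  rw [sub_add_cancel, mul_one] at h
  exact h

lemma traceLaurent_mul_single (n : ℕ) (α : ℤ → F)
    (hnorm : α ((n : ℤ) - 1) = 1) (htop : ∀ k : ℤ, (n : ℤ) ≤ k → α k = 0)
    (f : LaurentSeries F) (hf : f ≠ 0) :
    traceLaurent α (f * HahnSeries.single ((n : ℤ) - 1 - f.order) 1) = f.coeff f.order := by
  unfold traceLaurent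
  rw [finsum_eq_single _ ((n : ℤ) - 1) ?_]
  · rw [coeff_mul_single', sub_sub_cancel, hnorm, one_mul]
  · intro i hi
    rw [coeff_mul_single']
    rcases lt_or_gt_of_ne hi with h | h
    · rw [HahnSeries.coeff_eq_zero_of_lt_order (by omega), mul_zero]
    · rw [htop i (by omega), zero_mul]

lemma traceLaurent_zero (α : ℤ → F) : traceLaurent α (0 : LaurentSeries F) = 0 := by
  simp [traceLaurent]

lemma ofPS_coeff (h : PowerSeries F) (i : ℤ) :
    (HahnSeries.ofPowerSeries ℤ F h).coeff i =
      if 0 ≤ i then PowerSeries.coeff i.toNat h else 0 := by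
  split_ifs with hi
  · obtain ⟨k, rfl⟩ : ∃ k : ℕ, i = (k : ℤ) := ⟨i.toNat, (Int.toNat_of_nonneg hi).symm⟩
    rw [HahnSeries.ofPowerSeries_apply_coeff]
    simp
  · rw [HahnSeries.ofPowerSeries_apply, HahnSeries.embDomain_notin_range]
    rintro ⟨k, hk⟩
    simp only [Nat.castOrderEmbedding_apply] at hk
    omega

lemma traceLaurent_ofPS (n : ℕ) (α : ℤ → F) (htop : ∀ k : ℤ, (n : ℤ) ≤ k → α k = 0)
    (h : PowerSeries F) :
    traceLaurent α (HahnSeries.ofPowerSeries ℤ F h) =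
      ∑ i ∈ Finset.range n, α (i : ℤ) * PowerSeries.coeff i h := by
  unfold traceLaurent
  rw [finsum_eq_finset_sum_of_support_subset _
    (s := (Finset.range n).map ⟨(Nat.cast : ℕ → ℤ), Nat.cast_injective⟩) ?_]
  · rw [Finset.sum_map]
    refine Finset.sum_congr rfl fun i _ => ?_
    simp [ofPS_coeff]
  · intro i hi
    simp only [Function.mem_support] at hi
    have h1 : 0 ≤ i := by
      by_contra hneg
      rw [ofPS_coeff, if_neg (by omega), mul_zero] at hi
      exact hi rfl
    have h2 : i < (n : ℤ) := by
      by_contra hge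
      rw [htop i (by omega), zero_mul] at hi
      exact hi rfl
    simp only [Finset.coe_map, Set.mem_image, Finset.mem_coe, Finset.mem_range,
      Function.Embedding.coeFn_mk]
    exact ⟨i.toNat, by omega, by omega⟩

lemma coeff_trunc_mul_trunc (n : ℕ) (a b : PowerSeries F) {i : ℕ} (hi : i < n) :
    (PowerSeries.trunc n a * PowerSeries.trunc n b).coeff i = PowerSeries.coeff i (a * b) := by
  have key := PowerSeries.trunc_trunc_mul_trunc (n := n) a b
  have h1 : (PowerSeries.trunc n a * PowerSeries.trunc n b).coeff i
      = PowerSeries.coeff i ((PowerSeries.trunc n a : PowerSeries F)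
        * (PowerSeries.trunc n b : PowerSeries F)) := by
    rw [← Polynomial.coe_mul, Polynomial.coeff_coe]
  rw [h1]
  have h2 := congrArg (fun p => Polynomial.coeff p i) key
  simp only [PowerSeries.coeff_trunc, if_pos hi] at h2
  exact h2

lemma traceTrunc_key (n : ℕ) (hn : 1 ≤ n) (α : ℤ → F)
    (hnorm : α ((n : ℤ) - 1) = 1) (g : Polynomial F)
    (H : ∀ m < n, traceTrunc n α (g * Polynomial.X ^ m) = 0) :
    ∀ i < n, g.coeff i = 0 := by
  classical
  by_contra hc
  push_neg at hc
  obtain ⟨i, hi, hgi⟩ := hc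
  set S := (Finset.range n).filter (fun k => g.coeff k ≠ 0) with hS
  have hSne : S.Nonempty := ⟨i, by simp [hS, hi, hgi]⟩
  set j := S.min' hSne with hj
  have hjS : j ∈ S := S.min'_mem hSne
  have hjn : j < n := Finset.mem_range.mp (Finset.mem_filter.mp hjS).1
  have hjne : g.coeff j ≠ 0 := (Finset.mem_filter.mp hjS).2
  have hmin : ∀ k ∈ S, j ≤ k := fun k hk => S.min'_le k hk
  have H' := H (n - 1 - j) (by omega)
  unfold traceTrunc at H'
  rw [Finset.sum_eq_single (n - 1)] at H'
  · rw [Polynomial.coeff_mul_X_pow', if_pos (by omega)] at H'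
    have hidx : n - 1 - (n - 1 - j) = j := by omega
    rw [hidx] at H'
    have hcast : ((n - 1 : ℕ) : ℤ) = (n : ℤ) - 1 := by omega
    rw [hcast, hnorm, one_mul] at H'
    exact hjne H'
  · intro b hb hbne
    have hbn : b < n := Finset.mem_range.mp hb
    rw [Polynomial.coeff_mul_X_pow']
    split_ifs with hle
    · have hz : g.coeff (b - (n - 1 - j)) = 0 := by
        by_contra hne
        have hmem : b - (n - 1 - j) ∈ S := by
          refine Finset.mem_filter.mpr ⟨Finset.mem_range.mpr (by omega), hne⟩
        have := hmin _ hmem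
        omega
      rw [hz, mul_zero]
    · rw [mul_zero]
  · intro hnot
    exact absurd (Finset.mem_range.mpr (by omega)) hnot

lemma traceTrunc_zero (n : ℕ) (α : ℤ → F) : traceTrunc n α (0 : Polynomial F) = 0 := by
  simp [traceTrunc]

lemma traceTrunc_sub (n : ℕ) (α : ℤ → F) (p q : Polynomial F) :
    traceTrunc n α (p - q) = traceTrunc n α p - traceTrunc n α q := by
  simp [traceTrunc, mul_sub, Finset.sum_sub_distrib]

lemma traceTrunc_Xpow_mul (n : ℕ) (α : ℤ → F) (s : Polynomial F) :
    traceTrunc n α (Polynomial.X ^ n * s) = 0 := by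
  unfold traceTrunc
  refine Finset.sum_eq_zero fun i hi => ?_
  rw [mul_comm (Polynomial.X ^ n) s, Polynomial.coeff_mul_X_pow',
    if_neg (by simpa using Finset.mem_range.mp hi), mul_zero]

lemma traceTrunc_congr (n : ℕ) (α : ℤ → F) {p q : Polynomial F}
    (h : (Polynomial.X : Polynomial F) ^ n ∣ p - q) (r : Polynomial F) :
    traceTrunc n α (p * r) = traceTrunc n α (q * r) := by
  obtain ⟨c, hc⟩ := h
  have hp : p = q + Polynomial.X ^ n * c := by linear_combination hc
  rw [hp, add_mul, mul_assoc]
  have : traceTrunc n α (q * r + Polynomial.X ^ n * (c * r))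
      = traceTrunc n α (q * r) + traceTrunc n α (Polynomial.X ^ n * (c * r)) := by
    simp [traceTrunc, mul_add, Finset.sum_add_distrib]
  rw [this, traceTrunc_Xpow_mul, add_zero]

lemma traceForm_diag (n : ℕ) (α : ℤ → F) (htop : ∀ k : ℤ, (n : ℤ) ≤ k → α k = 0)
    (a b : PowerSeries F) :
    traceForm n α (HahnSeries.ofPowerSeries ℤ F a, a.trunc n)
      (HahnSeries.ofPowerSeries ℤ F b, b.trunc n) = 0 := by
  simp only [traceForm]
  rw [← map_mul, traceLaurent_ofPS n α htop]
  unfold traceTrunc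
  rw [sub_eq_zero]
  exact Finset.sum_congr rfl fun i hi => by
    rw [coeff_trunc_mul_trunc n a b (Finset.mem_range.mp hi)]

lemma trunc_X_pow_eq (m n : ℕ) (hm : m < n) :
    PowerSeries.trunc n (PowerSeries.X ^ m : PowerSeries F) = Polynomial.X ^ m := by
  ext j
  rw [PowerSeries.coeff_trunc, Polynomial.coeff_X_pow]
  split_ifs with h1 h2 h2
  · rw [PowerSeries.coeff_X_pow, if_pos h2]
  · rw [PowerSeries.coeff_X_pow, if_neg h2]
  · omega
  · rfl

lemma trunc_X_pow_zero (m n : ℕ) (hm : n ≤ m) :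
    PowerSeries.trunc n (PowerSeries.X ^ m : PowerSeries F) = 0 := by
  ext j
  rw [PowerSeries.coeff_trunc]
  split_ifs with h1
  · rw [PowerSeries.coeff_X_pow, if_neg (by omega), Polynomial.coeff_zero]
  · rw [Polynomial.coeff_zero]

/-- Let `n ≥ 1` and `α = (αᵢ)_{i ≤ n-2}` a sequence in `F`, extended by
`α_{n-1} = 1` and `α_k = 0` for `k ≥ n`.  On `A(n,α) = F((x)) ⊕ F[x]/(xⁿ)` (elements of the
second factor represented by polynomials, modulo `xⁿ`), the trace form `(u,v) ↦ t(uv)` is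
non-degenerate, and the orthogonal complement of the diagonally embedded `F[[x]]`
(`h ↦ (h, h mod xⁿ)`) equals the diagonal `F[[x]]` itself. -/
theorem traceExtension_nondegenerate_and_diagonal_lagrangian
    (n : ℕ) (hn : 1 ≤ n) (α : ℤ → F)
    (hnorm : α ((n : ℤ) - 1) = 1)
    (htop : ∀ k : ℤ, (n : ℤ) ≤ k → α k = 0) :
    -- (1) non-degeneracy of the trace form on `F((x)) ⊕ F[x]/(xⁿ)`
    (∀ (f : LaurentSeries F) (g : Polynomial F),
      (∀ (f' : LaurentSeries F) (g' : Polynomial F),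
        traceForm n α (f, g) (f', g') = 0) →
      f = 0 ∧ (Polynomial.X : Polynomial F) ^ n ∣ g) ∧
    -- (2) the diagonal copy of `F[[x]]` coincides with its own orthogonal complement
    (∀ (f : LaurentSeries F) (g : Polynomial F),
      (∀ h : PowerSeries F,
        traceForm n α (f, g) (HahnSeries.ofPowerSeries ℤ F h, h.trunc n) = 0) ↔
      ∃ h : PowerSeries F,
        f = HahnSeries.ofPowerSeries ℤ F h ∧
        (Polynomial.X : Polynomial F) ^ n ∣ (g - h.trunc n)) := by
  constructor
  · -- part (1)
    intro f g H
    have hf : f = 0 := by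
      by_contra hf0
      have h1 := H (HahnSeries.single ((n : ℤ) - 1 - f.order) 1) 0
      simp only [traceForm, mul_zero, traceTrunc_zero, sub_zero] at h1
      rw [traceLaurent_mul_single n α hnorm htop f hf0] at h1
      exact hf0 (HahnSeries.coeff_order_eq_zero.mp h1)
    refine ⟨hf, ?_⟩
    rw [Polynomial.X_pow_dvd_iff]
    refine traceTrunc_key n hn α hnorm g fun m hm => ?_
    have h1 := H 0 (Polynomial.X ^ m)
    simp only [traceForm, mul_zero, traceLaurent_zero, zero_sub, neg_eq_zero] at h1
    exact h1
  · -- part (2)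
    intro f g
    constructor
    · intro H
      -- Step A: f has no negative coefficients
      have hA : ∀ i : ℤ, i < 0 → f.coeff i = 0 := by
        intro i hi
        by_contra hne
        have hf0 : f ≠ 0 := fun h => hne (by simp [h])
        have hord : f.order ≤ i := HahnSeries.order_le_of_coeff_ne_zero hne
        set m : ℤ := (n : ℤ) - 1 - f.order with hm
        have hmn : (n : ℤ) ≤ m := by omega
        have h := H (PowerSeries.X ^ m.toNat)
        simp only [traceForm] at h
        rw [HahnSeries.ofPowerSeries_X_pow] at h
        have hcast : ((m.toNat : ℕ) : ℤ) = m := Int.toNat_of_nonneg (by omega)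
        rw [hcast] at h
        rw [trunc_X_pow_zero m.toNat n (by omega), mul_zero, traceTrunc_zero, sub_zero] at h
        rw [traceLaurent_mul_single n α hnorm htop f hf0] at h
        exact hf0 (HahnSeries.coeff_order_eq_zero.mp h)
      -- Step B
      set h₀ : PowerSeries F := PowerSeries.mk (fun k => f.coeff (k : ℤ)) with hh₀
      have hf : f = HahnSeries.ofPowerSeries ℤ F h₀ := by
        ext i
        rw [ofPS_coeff]
        split_ifs with hi
        · rw [hh₀, PowerSeries.coeff_mk]
          congr 1
          omega
        · exact hA i (by omega)
      refine ⟨h₀, hf, ?_⟩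
      rw [Polynomial.X_pow_dvd_iff]
      refine traceTrunc_key n hn α hnorm _ fun m hm => ?_
      have h1 := H (PowerSeries.X ^ m)
      have h2 := traceForm_diag n α htop h₀ (PowerSeries.X ^ m)
      rw [← hf] at h2
      simp only [traceForm] at h1 h2
      have e1 := sub_eq_zero.mp h1
      have e2 := sub_eq_zero.mp h2
      have h3 := e1.symm.trans e2
      rw [trunc_X_pow_eq m n hm] at h3
      rw [sub_mul, traceTrunc_sub, h3, sub_self]
    · rintro ⟨h, rfl, hdvd⟩ h'
      simp only [traceForm]
      rw [← map_mul, traceLaurent_ofPS n α htop,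
        traceTrunc_congr n α hdvd (PowerSeries.trunc n h')]
      unfold traceTrunc
      rw [sub_eq_zero]
      exact Finset.sum_congr rfl fun i hi => by
        rw [coeff_trunc_mul_trunc n h h' (Finset.mem_range.mp hi)]
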